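/- Let S be a bounded linear operator on a complex Hilbert space H such that Re S is a positive operator, or Im S is a positive operator. Then, for the operator norm, ‖S S*‖ ≤ ‖(Re S)² + (Im S)²‖ + ‖Re S‖·‖Im S‖. -/

import Mathlib

/-- `|S| = (S* S)^{1/2}`, via the continuous functional calculus. -/
noncomputable def absOp {H : Type*} [NormedAddCommGroup H] [InnerProductSpace ℂ H]
    [CompleteSpace H] (S : H →L[ℂ] H) : H →L[ℂ] H :=
  CFC.sqrt (ContinuousLinearMap.adjoint S * S)

/-- `Re S = (S + S*)/2`. -/
noncomputable def reOp {H : Type*} [NormedAddCommGroup H] [InnerProductSpace ℂ H]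
    [CompleteSpace H] (S : H →L[ℂ] H) : H →L[ℂ] H :=
  (2⁻¹ : ℂ) • (S + ContinuousLinearMap.adjoint S)

/-- `Im S = (S - S*)/(2i)`. -/
noncomputable def imOp {H : Type*} [NormedAddCommGroup H] [InnerProductSpace ℂ H]
    [CompleteSpace H] (S : H →L[ℂ] H) : H →L[ℂ] H :=
  (2 * Complex.I)⁻¹ • (S - ContinuousLinearMap.adjoint S)

/-- Numerical radius `ω(S) = sup {|⟨Sx,x⟩| : ‖x‖ = 1}`. -/
noncomputable def numRadius {H : Type*} [NormedAddCommGroup H] [InnerProductSpace ℂ H]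
    [CompleteSpace H] (S : H →L[ℂ] H) : ℝ :=
  ⨆ x : {x : H // ‖x‖ = 1}, ‖(inner ℂ (S x) (x : H) : ℂ)‖

/-- Spectral radius, as a real number. -/
noncomputable def specRad {H : Type*} [NormedAddCommGroup H] [InnerProductSpace ℂ H]
    [CompleteSpace H] (S : H →L[ℂ] H) : ℝ :=
  (spectralRadius ℂ S).toReal

section Aux
variable {H : Type*} [NormedAddCommGroup H] [InnerProductSpace ℂ H] [CompleteSpace H]

lemma sa_norm_sub_half [Nontrivial (H →L[ℂ] H)] (A : H →L[ℂ] H) (hA : (0:H →L[ℂ] H) ≤ A) :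
    ‖A - algebraMap ℝ (H →L[ℂ] H) (‖A‖/2)‖ ≤ ‖A‖/2 := by
  set c : ℝ := ‖A‖/2 with hc
  set T : H →L[ℂ] H := A - algebraMap ℝ _ c with hT
  have hAsa : IsSelfAdjoint A := .of_nonneg hA
  have hTsa : IsSelfAdjoint T :=
    hAsa.sub (IsSelfAdjoint.algebraMap _ (isSelfAdjoint_iff.mpr rfl))
  have key : ∀ x ∈ spectrum ℝ T, -c ≤ x ∧ x ≤ c := by
    intro x hx
    rw [← spectrum.sub_singleton_eq] at hx
    obtain ⟨l, hl, r, hr, hlr⟩ := hx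
    rw [Set.mem_singleton_iff] at hr
    subst hr
    have hlr' : l - c = x := hlr
    have h0 : 0 ≤ l := spectrum_nonneg_of_nonneg hA hl
    have h1 : l ≤ ‖A‖ := (Real.le_norm_self l).trans (spectrum.norm_le_norm_of_mem hl)
    constructor <;> [linarith [hlr', h0, hc]; linarith [hlr', h1, hc]]
  rcases CStarAlgebra.norm_or_neg_norm_mem_spectrum hTsa with h | h
  · exact (key _ h).2
  · linarith [(key _ h).1]

lemma comm_norm_le [Nontrivial (H →L[ℂ] H)] (A B : H →L[ℂ] H) (hA : (0:H →L[ℂ] H) ≤ A)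
    (hB : IsSelfAdjoint B) : ‖A * B - B * A‖ ≤ ‖A‖ * ‖B‖ := by
  set c : ℝ := ‖A‖/2 with hc
  set T : H →L[ℂ] H := A - algebraMap ℝ _ c with hT
  have h1 : A * B - B * A = T * B - B * T := by
    simp only [hT, sub_mul, mul_sub, Algebra.commutes]
    abel
  have hTn : ‖T‖ ≤ c := sa_norm_sub_half A hA
  calc ‖A * B - B * A‖ = ‖T * B - B * T‖ := by rw [h1]
    _ ≤ ‖T * B‖ + ‖B * T‖ := norm_sub_le _ _
    _ ≤ ‖T‖ * ‖B‖ + ‖B‖ * ‖T‖ := add_le_add (norm_mul_le _ _) (norm_mul_le _ _)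
    _ ≤ c * ‖B‖ + ‖B‖ * c := by
        have := norm_nonneg B
        nlinarith [hTn, norm_nonneg T]
    _ = ‖A‖ * ‖B‖ := by rw [hc]; ring

lemma reOp_sa (S : H →L[ℂ] H) : IsSelfAdjoint (reOp S) := by
  rw [IsSelfAdjoint, reOp, star_smul, star_add, ContinuousLinearMap.star_eq_adjoint,
    ContinuousLinearMap.star_eq_adjoint, ContinuousLinearMap.adjoint_adjoint]
  simp [add_comm]

lemma imOp_sa (S : H →L[ℂ] H) : IsSelfAdjoint (imOp S) := by
  rw [IsSelfAdjoint, imOp, star_smul, star_sub, ContinuousLinearMap.star_eq_adjoint,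
    ContinuousLinearMap.star_eq_adjoint, ContinuousLinearMap.adjoint_adjoint]
  rw [show (star (2 * Complex.I)⁻¹ : ℂ) = -(2*Complex.I)⁻¹ by
    simp [Complex.ext_iff, Complex.inv_im, Complex.inv_re]]
  module

lemma decomp (S : H →L[ℂ] H) :
    S * ContinuousLinearMap.adjoint S =
      (reOp S)^2 + (imOp S)^2 + Complex.I • (imOp S * reOp S - reOp S * imOp S) := by
  set P := S
  set Q := ContinuousLinearMap.adjoint S
  rw [reOp, imOp]
  have hI : (2 * Complex.I)⁻¹ = -(2⁻¹) * Complex.I := by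
    field_simp [Complex.ext_iff]
    simp [Complex.I_sq]
  rw [hI]
  simp only [pow_two, smul_mul_assoc, mul_smul_comm, smul_smul, add_mul, mul_add,
    sub_mul, mul_sub, smul_add, smul_sub]
  rw [show ((-(2⁻¹:ℂ) * Complex.I) * (-(2⁻¹:ℂ) * Complex.I)) = -(4⁻¹:ℂ) by
    ring_nf; simp [Complex.I_sq]; ring]
  match_scalars <;> (ring_nf; try simp [Complex.I_sq]) <;> try ring
end Aux

theorem stmt_19 {H : Type*} [NormedAddCommGroup H] [InnerProductSpace ℂ H] [CompleteSpace H]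
    (S : H →L[ℂ] H) (hS : (reOp S).IsPositive ∨ (imOp S).IsPositive) :
    ‖S * ContinuousLinearMap.adjoint S‖ ≤
      ‖(reOp S) ^ 2 + (imOp S) ^ 2‖ + ‖reOp S‖ * ‖imOp S‖ := by
  rcases subsingleton_or_nontrivial (H →L[ℂ] H) with hns | hns
  · have hz : ∀ T : H →L[ℂ] H, ‖T‖ = 0 := fun T => by rw [Subsingleton.elim T 0]; simp
    rw [hz, hz, hz, hz]
    norm_num
  · have hd := decomp S
    have step1 : ‖S * ContinuousLinearMap.adjoint S‖ ≤
        ‖(reOp S)^2 + (imOp S)^2‖ + ‖imOp S * reOp S - reOp S * imOp S‖ := by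
      rw [hd]
      refine (norm_add_le _ _).trans ?_
      gcongr
      rw [norm_smul, Complex.norm_I, one_mul]
    refine step1.trans ?_
    gcongr
    rcases hS with h | h
    · rw [← (ContinuousLinearMap.nonneg_iff_isPositive _)] at h
      rw [show imOp S * reOp S - reOp S * imOp S = -(reOp S * imOp S - imOp S * reOp S) by abel,
        norm_neg]
      exact comm_norm_le _ _ h (imOp_sa S)
    · rw [← (ContinuousLinearMap.nonneg_iff_isPositive _)] at h
      rw [mul_comm ‖reOp S‖]
      exact comm_norm_le _ _ h (reOp_sa S)
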